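/- Let k, s, m, n be positive integers with k < m ≤ n and gcd(s,n) = 1, and let W be an m-dimensional K-subspace of F. Suppose ψ ∈ L_{F/K} is such that for every f ∈ G_{k,s} there exists g ∈ G_{k,s} with f(ψ(x)) = g(x) for all x ∈ W (i.e., π_W(f ∘ ψ) ∈ π_W(G_{k,s}) for all f ∈ G_{k,s}). Then there exists b ∈ F such that ψ(x) = bx for all x ∈ W (i.e., ψ ≡ bX (mod θ_W)). -/

import Mathlib

/-- The set `L_{F/K}` of `K`-linearized polynomials over `F`. -/
def linearizedPolys (q : ℕ) (F : Type*) [Field F] : Set (Polynomial F) :=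
  {p | ∀ i : ℕ, p.coeff i ≠ 0 → ∃ j : ℕ, i = q ^ j}

/-- The set `G_{k,s}` of linearized polynomials
`a₀ X + a₁ X^{q^s} + ⋯ + a_{k-1} X^{q^{s(k-1)}}` with `a₀, …, a_{k-1} ∈ F`. -/
def Gks (q k s : ℕ) (F : Type*) [Field F] : Set (Polynomial F) :=
  {p | ∃ a : Fin k → F, p = ∑ i : Fin k, Polynomial.C (a i) * Polynomial.X ^ q ^ (s * (i : ℕ))}

open Finset Polynomial

section Aux

variable {F : Type*} [Field F] [Fintype F] [DecidableEq F]

/-- Fibers of an additive map have equal size, so the preimage of a finite set is bounded. -/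
lemma aux_fiber_card_le (φ : F → F) (hφ : ∀ x y, φ (x - y) = φ x - φ y) (T : Finset F) :
    (univ.filter fun x : F => φ x ∈ T).card ≤
      T.card * (univ.filter fun x : F => φ x = 0).card := by
  rw [mul_comm]
  refine Finset.card_le_mul_card_image_of_maps_to (f := φ) (t := T)
    (fun a ha => (mem_filter.mp ha).2) _ (fun b hb => ?_)
  by_cases hne : ((univ.filter fun x : F => φ x ∈ T).filter fun a => φ a = b).Nonempty
  · obtain ⟨x₀, hx₀⟩ := hne
    have hb0 : φ x₀ = b := (mem_filter.mp hx₀).2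
    refine Finset.card_le_card_of_injOn (fun x => x - x₀) (fun x hx => ?_) ?_
    · have hxb : φ x = b := (mem_filter.mp hx).2
      simp only [mem_coe, mem_filter, mem_univ, true_and, hφ, hxb, hb0, sub_self]
    · intro x _ y _ h
      exact sub_left_injective h
  · rw [Finset.not_nonempty_iff_eq_empty] at hne
    simp [hne]

/-- The kernel of `x ↦ x^{q^s} - x` has at most `q` elements, given that every fixed point of
`x ↦ x^{q^s}` is a fixed point of `x ↦ x^q`. -/
lemma aux_card_ker_le (q s : ℕ) (hq2 : 2 ≤ q)
    (hfix : ∀ x : F, x ^ q ^ s = x → x ^ q = x) :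
    (univ.filter fun x : F => x ^ q ^ s - x = 0).card ≤ q := by
  have hdeg : ((X : F[X]) ^ q - X).natDegree = q := by
    rw [natDegree_sub_eq_left_of_natDegree_lt] <;>
      simp only [natDegree_X_pow, natDegree_X] <;> omega
  have hne : ((X : F[X]) ^ q - X) ≠ 0 := by
    intro h
    rw [h, natDegree_zero] at hdeg
    omega
  have hsub : (univ.filter fun x : F => x ^ q ^ s - x = 0) ⊆
      ((X : F[X]) ^ q - X).roots.toFinset := by
    intro x hx
    have hx' : x ^ q ^ s = x := sub_eq_zero.mp (mem_filter.mp hx).2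
    have hxq : x ^ q = x := hfix x hx'
    rw [Multiset.mem_toFinset, mem_roots hne]
    simp [IsRoot, hxq]
  calc (univ.filter fun x : F => x ^ q ^ s - x = 0).card
      ≤ ((X : F[X]) ^ q - X).roots.toFinset.card := Finset.card_le_card hsub
    _ ≤ Multiset.card ((X : F[X]) ^ q - X).roots := Multiset.toFinset_card_le _
    _ ≤ ((X : F[X]) ^ q - X).natDegree := Polynomial.card_roots' _
    _ = q := hdeg

/-- Key bound: a nonzero `σ`-polynomial of `σ`-degree `d` (where `σ = x ↦ x^{q^s}`) has at most
`q^d` roots in `F`. -/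
lemma aux_card_roots_le (q s p e : ℕ) (hp : p.Prime) [CharP F p] (hqe : q = p ^ e)
    (hq2 : 2 ≤ q) (hfix : ∀ x : F, x ^ q ^ s = x → x ^ q = x) :
    ∀ d (c : ℕ → F), (∃ u, u ≤ d ∧ c u ≠ 0) →
      (univ.filter fun x : F => ∑ u ∈ range (d + 1), c u * x ^ q ^ (s * u) = 0).card ≤ q ^ d := by
  haveI : Fact p.Prime := ⟨hp⟩
  have hps : ∀ (x y : F) (j : ℕ), (x - y) ^ q ^ (s * j) = x ^ q ^ (s * j) - y ^ q ^ (s * j) := by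
    intro x y j
    rw [hqe, ← pow_mul]
    exact sub_pow_char_pow x y _
  intro d
  induction d using Nat.strong_induction_on with
  | _ d IH =>
  intro c hc
  cases d with
  | zero =>
    obtain ⟨u, hu, hcu⟩ := hc
    have hu0 : u = 0 := Nat.le_zero.mp hu
    subst hu0
    have hsub : (univ.filter fun x : F => ∑ u ∈ range 1, c u * x ^ q ^ (s * u) = 0) ⊆ {0} := by
      intro x hx
      have hx' := (mem_filter.mp hx).2
      rw [Finset.sum_range_one, Nat.mul_zero, pow_zero, pow_one] at hx'
      rcases mul_eq_zero.mp hx' with h | h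
      · exact absurd h hcu
      · simp [h]
    simpa using Finset.card_le_card hsub
  | succ d =>
    by_cases hcd : c (d + 1) = 0
    · have hset : (univ.filter fun x : F => ∑ u ∈ range (d + 2), c u * x ^ q ^ (s * u) = 0)
          = (univ.filter fun x : F => ∑ u ∈ range (d + 1), c u * x ^ q ^ (s * u) = 0) := by
        apply Finset.filter_congr
        intro x _
        rw [Finset.sum_range_succ, hcd, zero_mul, add_zero]
      rw [hset]
      have hc' : ∃ u, u ≤ d ∧ c u ≠ 0 := by
        obtain ⟨u, hu, hcu⟩ := hc
        refine ⟨u, ?_, hcu⟩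
        have hne : u ≠ d + 1 := fun h => hcu (h ▸ hcd)
        omega
      calc _ ≤ q ^ d := IH d (Nat.lt_succ_self d) c hc'
        _ ≤ q ^ (d + 1) := Nat.pow_le_pow_right (by omega) (Nat.le_succ d)
    · set S := univ.filter fun x : F => ∑ u ∈ range (d + 2), c u * x ^ q ^ (s * u) = 0 with hS
      by_cases hv : ∃ v ∈ S, v ≠ 0
      swap
      · have hsub : S ⊆ {0} := by
          intro x hx
          by_contra hx0
          exact hv ⟨x, hx, by simpa using hx0⟩
        calc S.card ≤ ({0} : Finset F).card := Finset.card_le_card hsub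
          _ = 1 := Finset.card_singleton 0
          _ ≤ q ^ (d + 1) := Nat.one_le_pow _ _ (by omega)
      obtain ⟨v, hvS, hv0⟩ := hv
      set c' : ℕ → F := fun u => c u * v ^ q ^ (s * u) with hc'def
      set S' := univ.filter fun x : F => ∑ u ∈ range (d + 2), c' u * x ^ q ^ (s * u) = 0 with hS'
      have hvpow : ∀ u : ℕ, v ^ q ^ (s * u) * (v⁻¹) ^ q ^ (s * u) = 1 := by
        intro u
        rw [← mul_pow, mul_inv_cancel₀ hv0, one_pow]
      have hterm1 : ∀ (u : ℕ) (y : F), c' u * (v⁻¹ * y) ^ q ^ (s * u) = c u * y ^ q ^ (s * u) := by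
        intro u y
        simp only [hc'def]
        rw [mul_pow]
        calc c u * v ^ q ^ (s * u) * ((v⁻¹) ^ q ^ (s * u) * y ^ q ^ (s * u))
            = c u * (v ^ q ^ (s * u) * (v⁻¹) ^ q ^ (s * u)) * y ^ q ^ (s * u) := by ring
          _ = c u * y ^ q ^ (s * u) := by rw [hvpow u, mul_one]
      have hterm2 : ∀ (u : ℕ) (x : F), c u * (v * x) ^ q ^ (s * u) = c' u * x ^ q ^ (s * u) := by
        intro u x
        simp only [hc'def]
        rw [mul_pow]
        ring
      have hcard : S.card = S'.card := by
        refine Finset.card_nbij' (fun y => v⁻¹ * y) (fun x => v * x) ?_ ?_ ?_ ?_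
        · intro y hy
          have hy' := (mem_filter.mp hy).2
          simp only [hS', mem_coe, mem_filter, mem_univ, true_and]
          calc ∑ u ∈ range (d + 2), c' u * (v⁻¹ * y) ^ q ^ (s * u)
              = ∑ u ∈ range (d + 2), c u * y ^ q ^ (s * u) :=
                Finset.sum_congr rfl fun u _ => hterm1 u y
            _ = 0 := hy'
        · intro x hx
          have hx' := (mem_filter.mp hx).2
          simp only [hS, mem_coe, mem_filter, mem_univ, true_and]
          calc ∑ u ∈ range (d + 2), c u * (v * x) ^ q ^ (s * u)
              = ∑ u ∈ range (d + 2), c' u * x ^ q ^ (s * u) :=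
                Finset.sum_congr rfl fun u _ => hterm2 u x
            _ = 0 := hx'
        · intro y _
          exact mul_inv_cancel_left₀ hv0 y
        · intro x _
          exact inv_mul_cancel_left₀ hv0 x
      have hsum0 : ∑ u ∈ range (d + 2), c' u = 0 := by
        have hv' := (mem_filter.mp hvS).2
        simpa [hc'def] using hv'
      set e' : ℕ → F := fun j => ∑ i ∈ Ico (j + 1) (d + 2), c' i with he'def
      have htop : e' d ≠ 0 := by
        have hIco : Ico (d + 1) (d + 2) = {d + 1} := by
          rw [Nat.Ico_succ_singleton]
        rw [he'def]
        simp only [hIco, Finset.sum_singleton, hc'def]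
        exact mul_ne_zero hcd (pow_ne_zero _ hv0)
      have hkey : ∀ x : F, ∑ u ∈ range (d + 2), c' u * x ^ q ^ (s * u)
          = ∑ j ∈ range (d + 1), e' j * (x ^ q ^ s - x) ^ q ^ (s * j) := by
        intro x
        have hstep : ∀ j : ℕ, (x ^ q ^ s - x) ^ q ^ (s * j)
            = x ^ q ^ (s * (j + 1)) - x ^ q ^ (s * j) := by
          intro j
          rw [hps]
          congr 1
          rw [← pow_mul, ← pow_add]
          congr 1
          ring
        symm
        calc ∑ j ∈ range (d + 1), e' j * (x ^ q ^ s - x) ^ q ^ (s * j)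
            = ∑ j ∈ range (d + 1), ∑ i ∈ Ico (j + 1) (d + 2),
                c' i * (x ^ q ^ (s * (j + 1)) - x ^ q ^ (s * j)) := by
              refine Finset.sum_congr rfl fun j _ => ?_
              rw [hstep j, he'def, Finset.sum_mul]
          _ = ∑ j ∈ Ico 0 (d + 2), ∑ i ∈ Ico (j + 1) (d + 2),
                c' i * (x ^ q ^ (s * (j + 1)) - x ^ q ^ (s * j)) := by
              rw [← Finset.range_eq_Ico]
              symm
              rw [Finset.sum_range_succ]
              simp
          _ = ∑ i ∈ Ico 0 (d + 2), ∑ j ∈ Ico 0 i,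
                c' i * (x ^ q ^ (s * (j + 1)) - x ^ q ^ (s * j)) :=
              Finset.sum_Ico_Ico_comm' 0 (d + 2) _
          _ = ∑ i ∈ range (d + 2), c' i * (x ^ q ^ (s * i) - x) := by
              rw [← Finset.range_eq_Ico]
              refine Finset.sum_congr rfl fun i _ => ?_
              rw [← Finset.mul_sum]
              congr 1
              have hts := Finset.sum_range_sub (fun j => x ^ q ^ (s * j)) i
              simpa using hts
          _ = ∑ u ∈ range (d + 2), c' u * x ^ q ^ (s * u)
              - (∑ u ∈ range (d + 2), c' u) * x := by
              rw [Finset.sum_mul, ← Finset.sum_sub_distrib]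
              refine Finset.sum_congr rfl fun i _ => ?_
              ring
          _ = ∑ u ∈ range (d + 2), c' u * x ^ q ^ (s * u) := by
              rw [hsum0, zero_mul, sub_zero]
      set T := univ.filter fun y : F => ∑ j ∈ range (d + 1), e' j * y ^ q ^ (s * j) = 0 with hT
      have hS'sub : S' ⊆ univ.filter fun x : F => (x ^ q ^ s - x) ∈ T := by
        intro x hx
        have hx2 := (mem_filter.mp hx).2
        rw [hkey x] at hx2
        simp only [mem_filter, mem_univ, true_and, hT]
        exact hx2
      have h1 : S'.card ≤ T.card * (univ.filter fun x : F => x ^ q ^ s - x = 0).card := by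
        calc S'.card ≤ (univ.filter fun x : F => (x ^ q ^ s - x) ∈ T).card :=
              Finset.card_le_card hS'sub
          _ ≤ _ := by
              refine aux_fiber_card_le (fun x => x ^ q ^ s - x) (fun x y => ?_) T
              have hxy := hps x y 1
              rw [mul_one] at hxy
              show (x - y) ^ q ^ s - (x - y) = (x ^ q ^ s - x) - (y ^ q ^ s - y)
              rw [hxy]
              ring
      have h2 : T.card ≤ q ^ d := IH d (Nat.lt_succ_self d) e' ⟨d, le_refl d, htop⟩
      have h3 := aux_card_ker_le (F := F) q s hq2 hfix
      calc S.card = S'.card := hcard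
        _ ≤ T.card * (univ.filter fun x : F => x ^ q ^ s - x = 0).card := h1
        _ ≤ q ^ d * q := Nat.mul_le_mul h2 h3
        _ = q ^ (d + 1) := (pow_succ q d).symm

end Aux

/-- If `ψ ∈ L_{F/K}` satisfies `π_W(f ∘ ψ) ∈ π_W(G_{k,s})` for every `f ∈ G_{k,s}`
(where `W` is an `m`-dimensional `K`-subspace of `F`), then `ψ ≡ bX (mod θ_W)` for
some `b ∈ F`, i.e. `ψ(x) = bx` for all `x ∈ W`. -/
theorem psi_is_scalar_on_W
    (K F : Type*) [Field K] [Fintype K] [Field F] [Fintype F] [Algebra K F]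
    (q k s m n : ℕ) (hq : q = Fintype.card K) (hn : Module.finrank K F = n)
    (hs : 0 < s) (hgcd : Nat.gcd s n = 1) (hk : 0 < k) (hkm : k < m) (hmn : m ≤ n)
    (W : Submodule K F) (hW : Module.finrank K W = m)
    (ψ : Polynomial F) (hψ : ψ ∈ linearizedPolys q F)
    (hcomp : ∀ f ∈ Gks q k s F, ∃ g ∈ Gks q k s F,
      ∀ x ∈ W, f.eval (ψ.eval x) = g.eval x) :
    ∃ b : F, ∀ x ∈ W, ψ.eval x = b * x := by
  classical
  -- characteristic bookkeeping
  set p := ringChar K with hpdef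
  haveI : CharP K p := ringChar.charP K
  obtain ⟨e, hpe, hcardK⟩ := FiniteField.card K p
  haveI : CharP F p := charP_of_injective_algebraMap (algebraMap K F).injective p
  have hqe : q = p ^ (e : ℕ) := hq ▸ hcardK
  have hq2 : 2 ≤ q := by
    rw [hq]
    exact Fintype.one_lt_card
  have hn2 : 2 ≤ n := by omega
  have hcardF : Fintype.card F = q ^ n := by
    rw [hq, ← hn]
    exact Module.card_eq_pow_finrank (K := K) (V := F)
  -- every fixed point of x ↦ x^{q^s} lies in the prime field K
  have hfix : ∀ x : F, x ^ q ^ s = x → x ^ q = x := by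
    intro x hx
    obtain ⟨a, -, ha⟩ := Nat.exists_mul_mod_eq_one_of_coprime hgcd (by omega)
    have hsa : s * a = n * (s * a / n) + 1 := by
      conv_lhs => rw [← Nat.div_add_mod (s * a) n, ha]
    set b := s * a / n with hbdef
    have hxn : x ^ q ^ n = x := by
      rw [← hcardF]
      exact FiniteField.pow_card x
    have hiter : ∀ (y : F) (t c : ℕ), y ^ q ^ t = y → y ^ q ^ (t * c) = y := by
      intro y t c h
      induction c with
      | zero => simp
      | succ c ihc =>
        rw [Nat.mul_succ, pow_add, pow_mul, ihc, h]
    have h1 : x ^ q ^ (s * a) = x := hiter x s a hx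
    have h2 : x ^ q ^ (n * b) = x := hiter x n b hxn
    calc x ^ q = (x ^ q ^ (n * b)) ^ q := by rw [h2]
      _ = x ^ (q ^ (n * b) * q) := (pow_mul x _ q).symm
      _ = x ^ q ^ (n * b + 1) := by rw [pow_succ]
      _ = x ^ q ^ (s * a) := by rw [← hsa]
      _ = x := h1
  -- the cardinality of W
  have hWcard : (Set.toFinset (W : Set F)).card = q ^ m := by
    rw [Set.toFinset_card, hq, ← hW]
    exact Module.card_eq_pow_finrank (K := K) (V := W)
  -- Lemma B: a σ-polynomial of σ-degree ≤ k vanishing on W is zero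
  have lemB : ∀ (c : ℕ → F), (∀ x ∈ W, ∑ u ∈ range (k + 1), c u * x ^ q ^ (s * u) = 0) →
      ∀ u, u ≤ k → c u = 0 := by
    intro c hvan
    by_contra h
    push_neg at h
    obtain ⟨u, hu, hcu⟩ := h
    have hb := aux_card_roots_le (F := F) q s p e hpe hqe hq2 hfix k c ⟨u, hu, hcu⟩
    have hsub : Set.toFinset (W : Set F) ⊆
        univ.filter fun x : F => ∑ u ∈ range (k + 1), c u * x ^ q ^ (s * u) = 0 := by
      intro x hx
      rw [Set.mem_toFinset] at hx
      simp only [mem_filter, mem_univ, true_and]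
      exact hvan x hx
    have hle := Finset.card_le_card hsub
    rw [hWcard] at hle
    have hlt : q ^ k < q ^ m := Nat.pow_lt_pow_right (by omega) hkm
    omega
  -- the monomials X^{q^{sj}} belong to G_{k,s}
  have hmono : ∀ j : Fin k, ((X : F[X]) ^ q ^ (s * (j : ℕ))) ∈ Gks q k s F := by
    intro j
    refine ⟨fun i => if i = j then 1 else 0, ?_⟩
    rw [Finset.sum_eq_single j]
    · simp
    · intro i _ hij
      simp [hij]
    · simp
  -- from hcomp: composing with each monomial stays in G_{k,s} on W
  have hstep : ∀ j : Fin k, ∃ bf : ℕ → F, ∀ x ∈ W,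
      (ψ.eval x) ^ q ^ (s * (j : ℕ)) = ∑ i ∈ range k, bf i * x ^ q ^ (s * i) := by
    intro j
    obtain ⟨g, ⟨bg, rfl⟩, hg⟩ := hcomp _ (hmono j)
    refine ⟨fun i => if h : i < k then bg ⟨i, h⟩ else 0, fun x hx => ?_⟩
    have h1 := hg x hx
    rw [Polynomial.eval_pow, Polynomial.eval_X] at h1
    rw [h1, Polynomial.eval_finset_sum]
    rw [← Fin.sum_univ_eq_sum_range
      (fun i => (if h : i < k then bg ⟨i, h⟩ else 0) * x ^ q ^ (s * i)) k]
    refine Finset.sum_congr rfl fun i _ => ?_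
    simp [i.isLt]
  choose bf hbf using hstep
  set a : ℕ → F := bf ⟨0, hk⟩ with hadef
  have ha0 : ∀ x ∈ W, ψ.eval x = ∑ i ∈ range k, a i * x ^ q ^ (s * i) := by
    intro x hx
    have h := hbf ⟨0, hk⟩ x hx
    simpa using h
  -- frobenius respects finite sums
  haveI : Fact p.Prime := ⟨hpe⟩
  have hfr : ∀ (j : ℕ) (S : Finset ℕ) (f : ℕ → F),
      (∑ i ∈ S, f i) ^ q ^ (s * j) = ∑ i ∈ S, (f i) ^ q ^ (s * j) := by
    intro j S f
    rw [hqe, ← pow_mul]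
    exact sum_pow_char_pow p _ S f
  -- key induction: all higher coefficients of a vanish
  have key : ∀ j, j < k → 1 ≤ j → a (k - j) = 0 := by
    intro j
    induction j using Nat.strong_induction_on with
    | _ j IH =>
    intro hjk hj1
    have hzero : ∀ i, k - j < i → i < k → a i = 0 := by
      intro i h1 h2
      have e1 : k - (k - i) = i := by omega
      have h3 := IH (k - i) (by omega) (by omega) (by omega)
      rwa [e1] at h3
    set c : ℕ → F := fun u => (if j ≤ u then (a (u - j)) ^ q ^ (s * j) else 0) -
        (if u < k then bf ⟨j, hjk⟩ u else 0) with hcdef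
    have hfilter : (range (k + 1)).filter (fun u => j ≤ u) = Ico j (k + 1) := by
      ext u
      simp only [mem_filter, mem_range, mem_Ico]
      omega
    have hvan : ∀ x ∈ W, ∑ u ∈ range (k + 1), c u * x ^ q ^ (s * u) = 0 := by
      intro x hx
      have hL : (ψ.eval x) ^ q ^ (s * j)
          = ∑ u ∈ range (k + 1),
            (if j ≤ u then (a (u - j)) ^ q ^ (s * j) else 0) * x ^ q ^ (s * u) := by
        rw [ha0 x hx, hfr]
        have hterm : ∀ i : ℕ, (a i * x ^ q ^ (s * i)) ^ q ^ (s * j)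
            = (a i) ^ q ^ (s * j) * x ^ q ^ (s * (i + j)) := by
          intro i
          rw [mul_pow]
          congr 1
          rw [← pow_mul, ← pow_add]
          congr 1
          ring
        calc ∑ i ∈ range k, (a i * x ^ q ^ (s * i)) ^ q ^ (s * j)
            = ∑ i ∈ range k, (a i) ^ q ^ (s * j) * x ^ q ^ (s * (i + j)) :=
              Finset.sum_congr rfl fun i _ => hterm i
          _ = ∑ i ∈ range (k + 1 - j), (a i) ^ q ^ (s * j) * x ^ q ^ (s * (i + j)) := by
              symm
              refine Finset.sum_subset ?_ ?_
              · exact Finset.range_subset_range.mpr (by omega)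
              · intro i hik hinotin
                rw [mem_range] at hik
                rw [mem_range] at hinotin
                have : a i = 0 := hzero i (by omega) hik
                rw [this, zero_pow (pow_ne_zero _ (show q ≠ 0 by omega)), zero_mul]
          _ = ∑ u ∈ Ico j (k + 1), (a (u - j)) ^ q ^ (s * j) * x ^ q ^ (s * u) := by
              rw [Finset.sum_Ico_eq_sum_range]
              refine Finset.sum_congr rfl fun i _ => ?_
              rw [Nat.add_sub_cancel_left]
              have he2 : s * (j + i) = s * (i + j) := by ring
              rw [he2]
          _ = ∑ u ∈ (range (k + 1)).filter (fun u => j ≤ u),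
                (a (u - j)) ^ q ^ (s * j) * x ^ q ^ (s * u) := by rw [hfilter]
          _ = ∑ u ∈ range (k + 1),
                (if j ≤ u then (a (u - j)) ^ q ^ (s * j) else 0) * x ^ q ^ (s * u) := by
              rw [Finset.sum_filter]
              refine Finset.sum_congr rfl fun u _ => ?_
              split_ifs with h
              · rfl
              · rw [zero_mul]
      have hR : (ψ.eval x) ^ q ^ (s * j)
          = ∑ u ∈ range (k + 1),
            (if u < k then bf ⟨j, hjk⟩ u else 0) * x ^ q ^ (s * u) := by
        have h1 := hbf ⟨j, hjk⟩ x hx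
        rw [h1, Finset.sum_range_succ]
        simp only [lt_irrefl, if_neg, ite_false, zero_mul, add_zero]
        refine Finset.sum_congr rfl fun u hu => ?_
        rw [mem_range] at hu
        rw [if_pos hu]
      calc ∑ u ∈ range (k + 1), c u * x ^ q ^ (s * u)
          = ∑ u ∈ range (k + 1),
              ((if j ≤ u then (a (u - j)) ^ q ^ (s * j) else 0) * x ^ q ^ (s * u)
               - (if u < k then bf ⟨j, hjk⟩ u else 0) * x ^ q ^ (s * u)) := by
            refine Finset.sum_congr rfl fun u _ => ?_
            rw [hcdef]
            ring
        _ = (ψ.eval x) ^ q ^ (s * j) - (ψ.eval x) ^ q ^ (s * j) := by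
            rw [Finset.sum_sub_distrib, ← hL, ← hR]
        _ = 0 := sub_self _
    have hck := lemB c hvan k (le_refl k)
    rw [hcdef] at hck
    simp only [if_pos (show j ≤ k by omega), if_neg (lt_irrefl k), sub_zero] at hck
    exact pow_eq_zero_iff (pow_ne_zero _ (show q ≠ 0 by omega)) |>.mp hck
  -- conclude
  refine ⟨a 0, fun x hx => ?_⟩
  rw [ha0 x hx]
  rw [Finset.sum_eq_single_of_mem 0 (Finset.mem_range.mpr hk)]
  · simp
  · intro i hi hi0
    have hik : i < k := Finset.mem_range.mp hi
    have hai : a i = 0 := by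
      have e1 : k - (k - i) = i := by omega
      have h := key (k - i) (by omega) (by omega)
      rwa [e1] at h
    rw [hai, zero_mul]
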